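/- Let X, Y be Banach spaces, F : X ⇉ Y, (x̄,ȳ) ∈ gph F, and γ > 0. If srg₁⁺F(x̄,ȳ) < γ, then there exists a function f : X → Y, Lipschitz continuous around x̄ with f(x̄) = 0 and lip f(x̄) < γ, such that srg₁⁺(F+f)(x̄,ȳ) = 0. Consequently rad[SR]_{lip}F(x̄,ȳ) ≤ srg₁⁺F(x̄,ȳ). -/

import Mathlib

open Metric Set ENNReal NNReal EMetric Filter Topology

variable {X Y : Type*} [NormedAddCommGroup X] [NormedSpace ℝ X]
  [NormedAddCommGroup Y] [NormedSpace ℝ Y]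

/-- The inverse of a set-valued mapping. -/
def svInv (F : X → Set Y) (y : Y) : Set X := {x | y ∈ F x}

/-- The sum `F + f` of a set-valued mapping and a single-valued function. -/
def addFun (F : X → Set Y) (f : X → Y) : X → Set Y := fun x => {z | z - f x ∈ F x}

/-- The Fréchet `ε`-coderivative of `F` at `(x, y) ∈ gph F` (sum norm on `X × Y`). -/
def epsCoderiv (ε : ℝ) (F : X → Set Y) (x : X) (y : Y) (ys : Y →L[ℝ] ℝ) :
    Set (X →L[ℝ] ℝ) :=
  {xs | ∀ η > 0, ∃ δ > 0, ∀ u v, v ∈ F u → ‖u - x‖ + ‖v - y‖ < δ →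
    xs (u - x) - ys (v - y) ≤ (ε + η) * (‖u - x‖ + ‖v - y‖)}

/-- The primal-dual subregularity constant `srg₁⁺` (via `ε`-coderivatives). -/
noncomputable def srg1plus (F : X → Set Y) (xb : X) (yb : Y) : ℝ≥0∞ :=
  ⨆ (ε : ℝ) (_ : 0 < ε), sInf {r : ℝ≥0∞ | ∃ (x : X) (y : Y)
    (xs : X →L[ℝ] ℝ) (ys : Y →L[ℝ] ℝ), y ∈ F x ∧ ‖ys‖ = 1 ∧
    xs ∈ epsCoderiv ε F x y ys ∧ 0 < ‖x - xb‖ ∧ ‖x - xb‖ < ε ∧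
    r = ENNReal.ofReal (‖y - yb‖ / ‖x - xb‖) + ENNReal.ofReal ‖xs‖}

/-- The Lipschitz modulus of `f` at `xb`. -/
noncomputable def lipMod (f : X → Y) (xb : X) : ℝ≥0∞ :=
  Filter.limsup (fun p : X × X => edist (f p.1) (f p.2) / edist p.1 p.2)
    ((𝓝 (xb, xb)) ⊓ Filter.principal {p : X × X | p.1 ≠ p.2})

/-- `F` is (metrically) subregular at `(xb, yb)`. -/
def Subregular (F : X → Set Y) (xb : X) (yb : Y) : Prop :=
  ∃ α : ℝ≥0, 0 < α ∧ ∃ δ > (0:ℝ), ∀ x, ‖x - xb‖ < δ →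
    (α : ℝ≥0∞) * infEdist x (svInv F yb) ≤ infEdist yb (F x)

/-- The radius of subregularity of `F` at `(xb, yb)` with respect to Lipschitz
continuous perturbations vanishing at `xb`. -/
noncomputable def radSRlip (F : X → Set Y) (xb : X) (yb : Y) : ℝ≥0∞ :=
  sInf {r : ℝ≥0∞ | ∃ f : X → Y, f xb = 0 ∧
    (∃ (K : ℝ≥0) (δ : ℝ), 0 < δ ∧ LipschitzOnWith K f (ball xb δ)) ∧
    ¬ Subregular (addFun F f) xb yb ∧ r = lipMod f xb}

section helperlemmas

lemma clamp01_lip (a b : ℝ) : |min 1 (max 0 a) - min 1 (max 0 b)| ≤ |a - b| := by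
  have h1 : |min 1 (max 0 a) - min 1 (max 0 b)| ≤ max |(1:ℝ) - 1| |max 0 a - max 0 b| :=
    abs_min_sub_min_le_max 1 (max 0 a) 1 (max 0 b)
  have h2 : |max 0 a - max 0 b| ≤ |a - b| := by
    rw [max_comm 0 a, max_comm 0 b]; exact abs_max_sub_max_le_abs a b 0
  simp only [sub_self, abs_zero] at h1
  exact le_trans (h1.trans (max_le (abs_nonneg _) le_rfl)) h2

lemma clampS_lip (s a b : ℝ) : |max (-s) (min s a) - max (-s) (min s b)| ≤ |a - b| := by
  have h1 : |max (-s) (min s a) - max (-s) (min s b)| ≤ |min s a - min s b| := by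
    rw [max_comm (-s) _, max_comm (-s) _]; exact abs_max_sub_max_le_abs _ _ _
  have h2 : |min s a - min s b| ≤ |a - b| := by
    rw [min_comm s a, min_comm s b]
    have := abs_min_sub_min_le_max a s b s
    simpa [abs_nonneg] using this
  exact h1.trans h2

lemma clamp01_nonneg (a : ℝ) : 0 ≤ min 1 (max 0 a) := le_min zero_le_one (le_max_left 0 a)
lemma clamp01_le_one (a : ℝ) : min 1 (max 0 a) ≤ 1 := min_le_left _ _
lemma clamp01_eq_one {a : ℝ} (h : 1 ≤ a) : min 1 (max 0 a) = 1 := by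
  rw [max_eq_right (le_trans zero_le_one h), min_eq_left h]
lemma clamp01_eq_zero {a : ℝ} (h : a ≤ 0) : min 1 (max 0 a) = 0 := by
  rw [max_eq_left h, min_eq_right zero_le_one]
lemma clampS_eq {s a : ℝ} (h1 : -s ≤ a) (h2 : a ≤ s) : max (-s) (min s a) = a := by
  rw [min_eq_right h2, max_eq_right h1]
lemma clampS_abs_le {s : ℝ} (hs : 0 ≤ s) (a : ℝ) : |max (-s) (min s a)| ≤ s := by
  rw [abs_le]; constructor
  · exact le_max_left _ _
  · exact max_le (by linarith) (min_le_left _ _)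

end helperlemmas

set_option maxHeartbeats 2000000 in
/-- The core construction. -/
lemma srg_construction (F : X → Set Y) (xb : X) (yb : Y)
    (c γ μ : ℝ) (hc : 0 < c) (hμ0 : 0 < μ) (hμ4 : μ ≤ 1/4)
    (hΛγ : (c + μ)/(1 - 2*μ) < γ)
    (εk : ℕ → ℝ) (xk : ℕ → X) (yk : ℕ → Y) (xsk : ℕ → X →L[ℝ] ℝ)
    (ysk : ℕ → Y →L[ℝ] ℝ) (wk : ℕ → Y) (δF2 : ℕ → ℝ)
    (hε0 : ∀ k, 0 < εk k)
    (hεsmall : ∀ k, εk k ≤ min (1/2) (min (μ^2/(1+2*c)) ((1+2*c)/(8*(4+3*c)^2))))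
    (hεto0 : ∀ a : ℝ, 0 < a → ∃ k, εk k < a)
    (hmemk : ∀ k, yk k ∈ F (xk k))
    (hρ0 : ∀ k, 0 < ‖xk k - xb‖)
    (hρε : ∀ k, ‖xk k - xb‖ < εk k)
    (hsum : ∀ k, ‖yk k - yb‖ / ‖xk k - xb‖ + ‖xsk k‖ < c)
    (hysk : ∀ k, ‖ysk k‖ = 1)
    (hwk : ∀ k, ‖wk k‖ ≤ 1)
    (hwk2 : ∀ k, 1 - εk k < ysk k (wk k))
    (hδF2pos : ∀ k, 0 < δF2 k)
    (hδF2 : ∀ k u v, v ∈ F u → ‖u - xk k‖ + ‖v - yk k‖ < δF2 k →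
      xsk k (u - xk k) - ysk k (v - yk k) ≤ (εk k + εk k) * (‖u - xk k‖ + ‖v - yk k‖))
    (hcodk : ∀ k, xsk k ∈ epsCoderiv (εk k) F (xk k) (yk k) (ysk k))
    (hdecay : ∀ k, ‖xk (k+1) - xb‖ ≤ μ/4 * ‖xk k - xb‖) :
    ∃ f : X → Y, f xb = 0 ∧
      (∃ K : ℝ≥0, LipschitzWith K f ∧ (K : ℝ≥0∞) < ENNReal.ofReal γ) ∧
      lipMod f xb < ENNReal.ofReal γ ∧ srg1plus (addFun F f) xb yb = 0 ∧
      ¬ Subregular (addFun F f) xb yb := by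
  classical
  -- basic constants
  have h2μ : (0:ℝ) < 1 - 2*μ := by nlinarith
  have hγ0 : 0 < γ := lt_trans (div_pos (by linarith) h2μ) hΛγ
  have hΛpos : 0 < (c + μ)/(1 - 2*μ) := div_pos (by linarith) h2μ
  have hεhalf : ∀ k, εk k ≤ 1/2 := fun k => le_trans (hεsmall k) (min_le_left _ _)
  have hεμ2 : ∀ k, εk k * (1+2*c) ≤ μ^2 := fun k =>
    (le_div_iff₀ (by linarith)).mp
      (le_trans (hεsmall k) (le_trans (min_le_right _ _) (min_le_left _ _)))
  have hεcap : ∀ k, εk k ≤ (1+2*c)/(8*(4+3*c)^2) := fun k =>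
    le_trans (hεsmall k) (le_trans (min_le_right _ _) (min_le_right _ _))
  have hck : ∀ k, ‖xsk k‖ < c := fun k =>
    lt_of_le_of_lt (le_add_of_nonneg_left (by positivity)) (hsum k)
  have hak : ∀ k, ‖yk k - yb‖ < c * ‖xk k - xb‖ := by
    intro k
    have h1 : ‖yk k - yb‖ / ‖xk k - xb‖ < c :=
      lt_of_le_of_lt (le_add_of_nonneg_right (norm_nonneg _)) (hsum k)
    rw [div_lt_iff₀ (hρ0 k)] at h1
    linarith [h1]
  have hμ1 : μ ≤ 1 := by linarith
  have hρdecay : ∀ j k, j < k → ‖xk k - xb‖ ≤ μ/4 * ‖xk j - xb‖ := by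
    intro j k hjk
    induction k, hjk using Nat.le_induction with
    | base => exact hdecay j
    | succ n hn ih =>
      have h1 := hdecay n
      have h2 := hρ0 j
      have h3 := hρ0 n
      nlinarith
  -- the derived radii
  obtain ⟨δk, hδk⟩ : ∃ δk : ℕ → ℝ, ∀ k, δk k = (1-μ) * ‖xk k - xb‖ := ⟨_, fun _ => rfl⟩
  obtain ⟨Rk, hRk⟩ : ∃ Rk : ℕ → ℝ, ∀ k,
      Rk k = min (δF2 k / (3+c)) (μ^2 * ‖xk k - xb‖/(1+c)) := ⟨_, fun _ => rfl⟩
  obtain ⟨τk, hτk⟩ : ∃ τk : ℕ → ℝ, ∀ k,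
      τk k = Real.sqrt (εk k * (1+2*c)) * Rk k := ⟨_, fun _ => rfl⟩
  have hδpos : ∀ k, 0 < δk k := fun k => by
    rw [hδk]; exact mul_pos (by linarith) (hρ0 k)
  have hδρ : ∀ k, δk k < ‖xk k - xb‖ := fun k => by
    rw [hδk]; nlinarith [hρ0 k]
  have hRpos : ∀ k, 0 < Rk k := fun k => by
    rw [hRk]
    exact lt_min (div_pos (hδF2pos k) (by linarith))
      (div_pos (mul_pos (pow_pos hμ0 2) (hρ0 k)) (by linarith))
  have hRρ : ∀ k, Rk k ≤ μ^2 * ‖xk k - xb‖/(1+c) := fun k => by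
    rw [hRk]; exact min_le_right _ _
  have hRσ : ∀ k, Rk k ≤ μ * ‖xk k - xb‖ := fun k => by
    have h1 := hRρ k; have h2 := hρ0 k
    rw [le_div_iff₀ (by linarith : (0:ℝ) < 1+c)] at h1
    nlinarith [mul_pos hc (hRpos k), mul_nonneg (mul_nonneg hμ0.le h2.le) (by linarith : (0:ℝ) ≤ 1-μ)]
  have hRρ1 : ∀ k, Rk k ≤ ‖xk k - xb‖ := fun k => le_trans (hRσ k) (by nlinarith [hρ0 k])
  have hcR : ∀ k, c * Rk k ≤ μ^2 * ‖xk k - xb‖ := fun k => by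
    have h1 := hRρ k; have h2 := hρ0 k
    have h3 : μ^2 * ‖xk k - xb‖/(1+c) * (1+c) = μ^2 * ‖xk k - xb‖ := by field_simp
    nlinarith [hRpos k]
  have h2R : ∀ k, 2 * Rk k ≤ δk k := fun k => by
    have h1 := hRρ k; have h2 := hρ0 k
    rw [hδk]
    have h3 : μ^2 * ‖xk k - xb‖/(1+c) ≤ μ^2 * ‖xk k - xb‖ := by
      rw [div_le_iff₀ (by linarith : (0:ℝ) < 1+c)]
      nlinarith [mul_nonneg (mul_nonneg (sq_nonneg μ) h2.le) hc.le]
    nlinarith [mul_pos h2 (show (0:ℝ) < 1 - μ - 2*μ^2 by nlinarith)]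
  have hRδ : ∀ k, Rk k < δk k := fun k => by
    have := hRσ k; have := hρ0 k; rw [hδk]; nlinarith
  have hRδF : ∀ k, Rk k ≤ δF2 k / (3+c) := fun k => by rw [hRk]; exact min_le_left _ _
  have hτpos : ∀ k, 0 < τk k := fun k => by
    rw [hτk]
    exact mul_pos (Real.sqrt_pos.mpr (mul_pos (hε0 k) (by linarith))) (hRpos k)
  have hsqrtμ : ∀ k, Real.sqrt (εk k * (1+2*c)) ≤ μ := fun k => by
    have := Real.sqrt_le_sqrt (hεμ2 k)
    rwa [Real.sqrt_sq hμ0.le] at this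
  have hτμR : ∀ k, τk k ≤ μ * Rk k := fun k => by
    rw [hτk]
    exact mul_le_mul_of_nonneg_right (hsqrtμ k) (hRpos k).le
  have hτR : ∀ k, τk k ≤ Rk k := fun k => le_trans (hτμR k) (by nlinarith [hRpos k])
  -- separation of the supports
  have hsep : ∀ j k, j ≠ k → δk j + δk k ≤ ‖xk j - xk k‖ := by
    have key2 : ∀ j k, j < k → δk j + δk k ≤ ‖xk j - xk k‖ := by
      intro j k hjk
      have h1 : ‖xk k - xb‖ ≤ μ/4 * ‖xk j - xb‖ := hρdecay j k hjk
      have h2 : ‖xk j - xb‖ - ‖xk k - xb‖ ≤ ‖xk j - xk k‖ := by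
        have h3 := norm_sub_norm_le (xk j - xb) (xk k - xb)
        rw [sub_sub_sub_cancel_right] at h3
        exact h3
      have h4 := hρ0 j; have h5 := hρ0 k
      rw [hδk, hδk]
      nlinarith
    intro j k hjk
    rcases lt_or_gt_of_ne hjk with hlt | hlt
    · exact key2 j k hlt
    · rw [norm_sub_rev, add_comm]; exact key2 k j hlt
  -- the bump functions and the perturbation
  obtain ⟨bk, hbk⟩ : ∃ bk : ℕ → X → ℝ, ∀ k u,
      bk k u = min 1 (max 0 ((δk k - ‖u - xk k‖) / ((1-2*μ) * ‖xk k - xb‖))) :=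
    ⟨_, fun _ _ => rfl⟩
  obtain ⟨βk, hβk⟩ : ∃ βk : ℕ → X → ℝ, ∀ k u,
      βk k u = min 1 (max 0 ((2*Rk k - ‖u - xk k‖) / Rk k)) := ⟨_, fun _ _ => rfl⟩
  obtain ⟨Tk, hTk⟩ : ∃ Tk : ℕ → ℝ → ℝ, ∀ k t,
      Tk k t = max (-(μ^2 * ‖xk k - xb‖)) (min (μ^2 * ‖xk k - xb‖) t) := ⟨_, fun _ _ => rfl⟩
  obtain ⟨hl, hhl⟩ : ∃ hl : ℕ → X → Y, ∀ k u,
      hl k u = (bk k u) • (yb - yk k) + ((bk k u) * (Tk k (xsk k (u - xk k)))) • (-(wk k))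
        + ((τk k) * (βk k u)) • (wk k) := ⟨_, fun _ _ => rfl⟩
  obtain ⟨f, hfdef⟩ : ∃ f : X → Y, ∀ u,
      f u = if hu : ∃ k, ‖u - xk k‖ < δk k then hl (Classical.choose hu) u else 0 :=
    ⟨_, fun _ => rfl⟩
  -- basic bump properties
  have hbk_one : ∀ k u, ‖u - xk k‖ ≤ μ * ‖xk k - xb‖ → bk k u = 1 := by
    intro k u hu
    rw [hbk]
    apply clamp01_eq_one
    rw [le_div_iff₀ (mul_pos h2μ (hρ0 k))]
    rw [hδk]; nlinarith
  have hbk_zero : ∀ k u, δk k ≤ ‖u - xk k‖ → bk k u = 0 := by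
    intro k u hu
    rw [hbk]
    apply clamp01_eq_zero
    apply div_nonpos_of_nonpos_of_nonneg (by linarith) (by positivity)
  have hβk_one : ∀ k u, ‖u - xk k‖ ≤ Rk k → βk k u = 1 := by
    intro k u hu
    rw [hβk]
    apply clamp01_eq_one
    rw [le_div_iff₀ (hRpos k)]; linarith
  have hβk_zero : ∀ k u, 2*Rk k ≤ ‖u - xk k‖ → βk k u = 0 := by
    intro k u hu
    rw [hβk]
    apply clamp01_eq_zero
    apply div_nonpos_of_nonpos_of_nonneg (by linarith) (hRpos k).le
  -- f agrees with local bumps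
  have hfloc : ∀ j u, ‖u - xk j‖ < δk j → f u = hl j u := by
    intro j u hj
    rw [hfdef u, dif_pos ⟨j, hj⟩]
    have hm := Classical.choose_spec (⟨j, hj⟩ : ∃ k, ‖u - xk k‖ < δk k)
    by_cases hmj : Classical.choose (⟨j, hj⟩ : ∃ k, ‖u - xk k‖ < δk k) = j
    · rw [hmj]
    · exfalso
      have h1 := hsep _ j hmj
      have h2 : ‖xk (Classical.choose (⟨j, hj⟩ : ∃ k, ‖u - xk k‖ < δk k)) - xk j‖ ≤
          ‖u - xk (Classical.choose (⟨j, hj⟩ : ∃ k, ‖u - xk k‖ < δk k))‖ + ‖u - xk j‖ := by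
        rw [← dist_eq_norm, ← dist_eq_norm, ← dist_eq_norm]
        rw [dist_comm u _]
        exact dist_triangle _ u _
      linarith
  have hlvanish : ∀ k u, δk k ≤ ‖u - xk k‖ → hl k u = 0 := by
    intro k u hu
    rw [hhl, hbk_zero k u hu, hβk_zero k u (le_trans (h2R k) hu)]
    simp
  have hfxb : f xb = 0 := by
    rw [hfdef]
    rw [dif_neg]
    rintro ⟨k, hk⟩
    rw [norm_sub_rev] at hk
    exact absurd hk (not_lt.mpr (hδρ k).le)
  -- local Lipschitz estimate for the bumps
  have hliploc : ∀ k u u', ‖hl k u - hl k u'‖ ≤ (c+μ)/(1-2*μ) * ‖u - u'‖ := by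
    intro k u u'
    have hρk := hρ0 k
    have hD : (0:ℝ) < (1-2*μ) * ‖xk k - xb‖ := mul_pos h2μ hρk
    set b1 := bk k u with hb1
    set b2 := bk k u' with hb2
    set T1 := Tk k (xsk k (u - xk k)) with hT1
    set T2 := Tk k (xsk k (u' - xk k)) with hT2
    set B1 := βk k u with hB1
    set B2 := βk k u' with hB2
    have hnormdiff : |‖u' - xk k‖ - ‖u - xk k‖| ≤ ‖u - u'‖ := by
      refine le_trans (abs_norm_sub_norm_le _ _) ?_
      rw [show (u' - xk k) - (u - xk k) = -(u - u') by abel, norm_neg]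
    have hDne : ((1-2*μ) * ‖xk k - xb‖) ≠ 0 := ne_of_gt hD
    have hRne : Rk k ≠ 0 := ne_of_gt (hRpos k)
    have hb : |b1 - b2| * ((1-2*μ) * ‖xk k - xb‖) ≤ ‖u - u'‖ := by
      have h0 : ((δk k - ‖u - xk k‖) / ((1-2*μ) * ‖xk k - xb‖)
          - (δk k - ‖u' - xk k‖) / ((1-2*μ) * ‖xk k - xb‖)) * ((1-2*μ) * ‖xk k - xb‖)
          = ‖u' - xk k‖ - ‖u - xk k‖ := by
        rw [div_sub_div_same, div_mul_cancel₀ _ hDne]; ring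
      have h2 : |b1 - b2| ≤ |(δk k - ‖u - xk k‖) / ((1-2*μ) * ‖xk k - xb‖)
          - (δk k - ‖u' - xk k‖) / ((1-2*μ) * ‖xk k - xb‖)| := by
        rw [hb1, hb2, hbk, hbk]; exact clamp01_lip _ _
      calc |b1 - b2| * ((1-2*μ) * ‖xk k - xb‖)
          ≤ |(δk k - ‖u - xk k‖) / ((1-2*μ) * ‖xk k - xb‖)
            - (δk k - ‖u' - xk k‖) / ((1-2*μ) * ‖xk k - xb‖)| * ((1-2*μ) * ‖xk k - xb‖) :=
            mul_le_mul_of_nonneg_right h2 hD.le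
      _ = |((δk k - ‖u - xk k‖) / ((1-2*μ) * ‖xk k - xb‖)
            - (δk k - ‖u' - xk k‖) / ((1-2*μ) * ‖xk k - xb‖)) * ((1-2*μ) * ‖xk k - xb‖)| := by
            rw [abs_mul, abs_of_pos hD]
      _ = |‖u' - xk k‖ - ‖u - xk k‖| := by rw [h0]
      _ ≤ ‖u - u'‖ := hnormdiff
    have hβ : |B1 - B2| * Rk k ≤ ‖u - u'‖ := by
      have h0 : ((2*Rk k - ‖u - xk k‖) / Rk k - (2*Rk k - ‖u' - xk k‖) / Rk k) * Rk k
          = ‖u' - xk k‖ - ‖u - xk k‖ := by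
        rw [div_sub_div_same, div_mul_cancel₀ _ hRne]; ring
      have h2 : |B1 - B2| ≤ |(2*Rk k - ‖u - xk k‖) / Rk k
          - (2*Rk k - ‖u' - xk k‖) / Rk k| := by
        rw [hB1, hB2, hβk, hβk]; exact clamp01_lip _ _
      calc |B1 - B2| * Rk k
          ≤ |(2*Rk k - ‖u - xk k‖) / Rk k - (2*Rk k - ‖u' - xk k‖) / Rk k| * Rk k :=
            mul_le_mul_of_nonneg_right h2 (hRpos k).le
      _ = |((2*Rk k - ‖u - xk k‖) / Rk k - (2*Rk k - ‖u' - xk k‖) / Rk k) * Rk k| := by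
            rw [abs_mul, abs_of_pos (hRpos k)]
      _ = |‖u' - xk k‖ - ‖u - xk k‖| := by rw [h0]
      _ ≤ ‖u - u'‖ := hnormdiff
    have hT : |T1 - T2| ≤ ‖xsk k‖ * ‖u - u'‖ := by
      rw [hT1, hT2, hTk, hTk]
      refine le_trans (clampS_lip _ _ _) ?_
      rw [← map_sub]
      have h1 : (u - xk k) - (u' - xk k) = u - u' := by abel
      rw [h1, ← Real.norm_eq_abs]
      exact (xsk k).le_opNorm _
    have hTb : |T2| ≤ μ^2 * ‖xk k - xb‖ := by
      rw [hT2, hTk]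
      exact clampS_abs_le (by positivity) _
    have hb01 : 0 ≤ b1 ∧ b1 ≤ 1 := by
      rw [hb1, hbk]; exact ⟨clamp01_nonneg _, clamp01_le_one _⟩
    have h6 : |b1 * T1 - b2 * T2| ≤ ‖xsk k‖ * ‖u - u'‖ + μ^2 * ‖xk k - xb‖ * |b1 - b2| := by
      have h1 : b1 * T1 - b2 * T2 = b1 * (T1 - T2) + T2 * (b1 - b2) := by ring
      rw [h1]
      refine le_trans (abs_add_le _ _) ?_
      rw [abs_mul, abs_mul]
      have h2 : |b1| ≤ 1 := by rw [abs_of_nonneg hb01.1]; exact hb01.2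
      have h3 := abs_nonneg (T1 - T2)
      have h4 := abs_nonneg (b1 - b2)
      nlinarith [abs_nonneg b1, hTb, hT]
    have hτβ : τk k * |B1 - B2| ≤ μ * ‖u - u'‖ := by
      have h5 : τk k * (|B1 - B2| * Rk k) ≤ (μ * Rk k) * ‖u - u'‖ :=
        mul_le_mul (hτμR k) hβ (mul_nonneg (abs_nonneg _) (hRpos k).le)
          (mul_nonneg hμ0.le (hRpos k).le)
      nlinarith [hRpos k, h5]
    have hdiff : hl k u - hl k u' = (b1 - b2) • (yb - yk k)
        + (b1 * T1 - b2 * T2) • (-(wk k)) + (τk k * (B1 - B2)) • (wk k) := by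
      rw [hhl, hhl, ← hb1, ← hb2, ← hT1, ← hT2, ← hB1, ← hB2]
      module
    rw [hdiff]
    refine le_trans (norm_add₃_le) ?_
    rw [norm_smul, norm_smul, norm_smul, norm_neg, Real.norm_eq_abs, Real.norm_eq_abs,
      Real.norm_eq_abs, abs_mul, abs_of_pos (hτpos k), norm_sub_rev yb (yk k)]
    rw [div_mul_eq_mul_div, le_div_iff₀ h2μ]
    apply (mul_le_mul_iff_of_pos_right hρk).mp
    have hw := hwk k
    have hw0 := norm_nonneg (wk k)
    have hN0 := norm_nonneg (u - u')
    have hsum4 : ‖yk k - yb‖ + ‖xsk k‖ * ‖xk k - xb‖ ≤ c * ‖xk k - xb‖ := by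
      have h1 := hsum k
      rw [div_add' _ _ _ (ne_of_gt hρk), div_lt_iff₀ hρk] at h1
      linarith
    have ha1 := abs_nonneg (b1 - b2)
    have ha2 := abs_nonneg (b1 * T1 - b2 * T2)
    have ha3 := abs_nonneg (B1 - B2)
    have hY0 := norm_nonneg (yk k - yb)
    have hS0 := norm_nonneg (xsk k)
    have G1 : |b1 - b2| * ‖yk k - yb‖ * ((1-2*μ) * ‖xk k - xb‖) ≤ ‖yk k - yb‖ * ‖u - u'‖ := by
      calc |b1 - b2| * ‖yk k - yb‖ * ((1-2*μ) * ‖xk k - xb‖)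
          = ‖yk k - yb‖ * (|b1 - b2| * ((1-2*μ) * ‖xk k - xb‖)) := by ring
      _ ≤ ‖yk k - yb‖ * ‖u - u'‖ := mul_le_mul_of_nonneg_left hb hY0
    have G2 : |b1 * T1 - b2 * T2| * ((1-2*μ) * ‖xk k - xb‖) ≤
        ‖xsk k‖ * ‖u - u'‖ * ((1-2*μ) * ‖xk k - xb‖)
          + μ^2 * ‖xk k - xb‖ * ‖u - u'‖ := by
      have h7 := mul_le_mul_of_nonneg_right h6 hD.le
      have h8 : μ^2 * ‖xk k - xb‖ * |b1 - b2| * ((1-2*μ) * ‖xk k - xb‖)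
          ≤ μ^2 * ‖xk k - xb‖ * ‖u - u'‖ := by
        calc μ^2 * ‖xk k - xb‖ * |b1 - b2| * ((1-2*μ) * ‖xk k - xb‖)
            = μ^2 * ‖xk k - xb‖ * (|b1 - b2| * ((1-2*μ) * ‖xk k - xb‖)) := by ring
        _ ≤ μ^2 * ‖xk k - xb‖ * ‖u - u'‖ :=
              mul_le_mul_of_nonneg_left hb (by positivity)
      nlinarith [h7, h8]
    have G3 : τk k * |B1 - B2| * ((1-2*μ) * ‖xk k - xb‖)
        ≤ μ * ‖u - u'‖ * ((1-2*μ) * ‖xk k - xb‖) :=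
      mul_le_mul_of_nonneg_right hτβ hD.le
    have G4 : ‖yk k - yb‖ * ‖u - u'‖ + ‖xsk k‖ * ‖xk k - xb‖ * ‖u - u'‖
        ≤ c * ‖xk k - xb‖ * ‖u - u'‖ := by
      have := mul_le_mul_of_nonneg_right hsum4 hN0
      nlinarith [this]
    have G5 : |b1 * T1 - b2 * T2| * ‖wk k‖ * ((1-2*μ) * ‖xk k - xb‖)
        ≤ |b1 * T1 - b2 * T2| * ((1-2*μ) * ‖xk k - xb‖) := by
      nlinarith [mul_le_mul_of_nonneg_left hw ha2, hD]
    have G6 : τk k * |B1 - B2| * ‖wk k‖ * ((1-2*μ) * ‖xk k - xb‖)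
        ≤ τk k * |B1 - B2| * ((1-2*μ) * ‖xk k - xb‖) := by
      nlinarith [mul_le_mul_of_nonneg_left hw (mul_nonneg (hτpos k).le ha3), hD]
    have hμN : (0:ℝ) ≤ μ^2 * ‖xk k - xb‖ * ‖u - u'‖ := by positivity
    have hμS : (0:ℝ) ≤ μ * (‖xsk k‖ * ‖xk k - xb‖ * ‖u - u'‖) := by positivity
    nlinarith [G1, G2, G3, G4, G5, G6, hμN, hμS]
  -- bound on the local bump in terms of the distance to the support boundary
  have hlocbound : ∀ k u, ‖u - xk k‖ < δk k →
      ‖hl k u‖ ≤ (c+μ)/(1-2*μ) * (δk k - ‖u - xk k‖) := by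
    intro k u hu
    by_cases hux : u = xk k
    · have hp : ‖(xk k + (δk k / ‖xk 0 - xb‖) • (xk 0 - xb)) - xk k‖ = δk k := by
        rw [add_sub_cancel_left, norm_smul, Real.norm_eq_abs,
          abs_of_pos (div_pos (hδpos k) (hρ0 0)), div_mul_cancel₀ _ (ne_of_gt (hρ0 0))]
      have hz : hl k (xk k + (δk k / ‖xk 0 - xb‖) • (xk 0 - xb)) = 0 :=
        hlvanish k _ (le_of_eq hp.symm)
      have hup : ‖u - (xk k + (δk k / ‖xk 0 - xb‖) • (xk 0 - xb))‖ = δk k := by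
        rw [hux, show xk k - (xk k + (δk k / ‖xk 0 - xb‖) • (xk 0 - xb))
          = -((xk k + (δk k / ‖xk 0 - xb‖) • (xk 0 - xb)) - xk k) by abel, norm_neg, hp]
      calc ‖hl k u‖ = ‖hl k u - hl k (xk k + (δk k / ‖xk 0 - xb‖) • (xk 0 - xb))‖ := by
            rw [hz, sub_zero]
      _ ≤ (c+μ)/(1-2*μ) * ‖u - (xk k + (δk k / ‖xk 0 - xb‖) • (xk 0 - xb))‖ := hliploc k _ _
      _ = (c+μ)/(1-2*μ) * (δk k - ‖u - xk k‖) := by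
            rw [hup, hux, sub_self, norm_zero, sub_zero]
    · have hr0 : 0 < ‖u - xk k‖ := norm_pos_iff.mpr (sub_ne_zero.mpr hux)
      have hp : ‖(xk k + (δk k / ‖u - xk k‖) • (u - xk k)) - xk k‖ = δk k := by
        rw [add_sub_cancel_left, norm_smul, Real.norm_eq_abs,
          abs_of_pos (div_pos (hδpos k) hr0), div_mul_cancel₀ _ (ne_of_gt hr0)]
      have hz : hl k (xk k + (δk k / ‖u - xk k‖) • (u - xk k)) = 0 :=
        hlvanish k _ (le_of_eq hp.symm)
      have hup : ‖u - (xk k + (δk k / ‖u - xk k‖) • (u - xk k))‖ = δk k - ‖u - xk k‖ := by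
        have h1 : u - (xk k + (δk k / ‖u - xk k‖) • (u - xk k))
            = (1 - δk k / ‖u - xk k‖) • (u - xk k) := by
          rw [sub_smul, one_smul]; abel
        rw [h1, norm_smul, Real.norm_eq_abs]
        have h2 : 1 - δk k / ‖u - xk k‖ < 0 := by
          rw [sub_neg, lt_div_iff₀ hr0, one_mul]; exact hu
        rw [abs_of_neg h2]
        field_simp
        ring
      calc ‖hl k u‖ = ‖hl k u - hl k (xk k + (δk k / ‖u - xk k‖) • (u - xk k))‖ := by
            rw [hz, sub_zero]
      _ ≤ (c+μ)/(1-2*μ) * ‖u - (xk k + (δk k / ‖u - xk k‖) • (u - xk k))‖ := hliploc k _ _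
      _ = (c+μ)/(1-2*μ) * (δk k - ‖u - xk k‖) := by rw [hup]
  -- the mixed case for the global Lipschitz property
  have hmix : ∀ u u', (∃ j, ‖u - xk j‖ < δk j) → (¬ ∃ m, ‖u' - xk m‖ < δk m) →
      ‖f u - f u'‖ ≤ (c+μ)/(1-2*μ) * ‖u - u'‖ := by
    intro u u' hu hu'
    obtain ⟨j, hj⟩ := hu
    rw [hfloc j u hj, hfdef u', dif_neg hu', sub_zero]
    push_neg at hu'
    have h1 : δk j ≤ ‖u' - xk j‖ := hu' j
    have htri : ‖u' - xk j‖ ≤ ‖u - u'‖ + ‖u - xk j‖ := by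
      calc ‖u' - xk j‖ = ‖(u' - u) + (u - xk j)‖ := by rw [sub_add_sub_cancel]
      _ ≤ ‖u' - u‖ + ‖u - xk j‖ := norm_add_le _ _
      _ = ‖u - u'‖ + ‖u - xk j‖ := by rw [norm_sub_rev]
    refine le_trans (hlocbound j u hj) ?_
    have h2 : δk j - ‖u - xk j‖ ≤ ‖u - u'‖ := by linarith
    exact mul_le_mul_of_nonneg_left h2 hΛpos.le
  -- global Lipschitz property
  have hglip : ∀ u u', ‖f u - f u'‖ ≤ (c+μ)/(1-2*μ) * ‖u - u'‖ := by
    intro u u'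
    by_cases hu : ∃ j, ‖u - xk j‖ < δk j
    · by_cases hu' : ∃ m, ‖u' - xk m‖ < δk m
      · obtain ⟨j, hj⟩ := hu
        obtain ⟨m, hm⟩ := hu'
        rw [hfloc j u hj, hfloc m u' hm]
        by_cases hjm : j = m
        · subst hjm; exact hliploc j u u'
        · have b1 := hlocbound j u hj
          have b2 := hlocbound m u' hm
          have hs := hsep j m hjm
          have htri : ‖xk j - xk m‖ ≤ ‖u - xk j‖ + ‖u - u'‖ + ‖u' - xk m‖ := by
            calc ‖xk j - xk m‖ = ‖-(u - xk j) + (u - u') + (u' - xk m)‖ := by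
                  congr 1; abel
            _ ≤ ‖-(u - xk j) + (u - u')‖ + ‖u' - xk m‖ := norm_add_le _ _
            _ ≤ ‖-(u - xk j)‖ + ‖u - u'‖ + ‖u' - xk m‖ := by
                  have := norm_add_le (-(u - xk j)) (u - u')
                  linarith
            _ = ‖u - xk j‖ + ‖u - u'‖ + ‖u' - xk m‖ := by rw [norm_neg]
          have h3 : δk j - ‖u - xk j‖ + (δk m - ‖u' - xk m‖) ≤ ‖u - u'‖ := by linarith
          calc ‖hl j u - hl m u'‖ ≤ ‖hl j u‖ + ‖hl m u'‖ := norm_sub_le _ _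
          _ ≤ (c+μ)/(1-2*μ) * (δk j - ‖u - xk j‖) + (c+μ)/(1-2*μ) * (δk m - ‖u' - xk m‖) := by
                linarith
          _ = (c+μ)/(1-2*μ) * (δk j - ‖u - xk j‖ + (δk m - ‖u' - xk m‖)) := by ring
          _ ≤ (c+μ)/(1-2*μ) * ‖u - u'‖ := mul_le_mul_of_nonneg_left h3 hΛpos.le
      · exact hmix u u' hu hu'
    · by_cases hu' : ∃ m, ‖u' - xk m‖ < δk m
      · rw [show f u - f u' = -(f u' - f u) by abel, norm_neg, norm_sub_rev u u']
        exact hmix u' u hu' hu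
      · rw [hfdef u, hfdef u', dif_neg hu, dif_neg hu', sub_zero, norm_zero]
        positivity
  have hlipf : LipschitzWith ((c+μ)/(1-2*μ)).toNNReal f := by
    apply LipschitzWith.of_dist_le_mul
    intro x y
    rw [dist_eq_norm, dist_eq_norm, Real.coe_toNNReal _ hΛpos.le]
    exact hglip x y
  have hKlt : ((((c+μ)/(1-2*μ)).toNNReal : ℝ≥0) : ℝ≥0∞) < ENNReal.ofReal γ := by
    have h1 : ((((c+μ)/(1-2*μ)).toNNReal : ℝ≥0) : ℝ≥0∞) = ENNReal.ofReal ((c+μ)/(1-2*μ)) :=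
      rfl
    rw [h1]
    exact (ENNReal.ofReal_lt_ofReal_iff hγ0).mpr hΛγ
  have hlm : lipMod f xb < ENNReal.ofReal γ := by
    refine lt_of_le_of_lt ?_ hKlt
    unfold lipMod
    exact Filter.limsup_le_of_le (by isBoundedDefault)
      (Filter.Eventually.of_forall fun p => ENNReal.div_le_of_le_mul (hlipf p.1 p.2))
  -- the flat-region formula for f
  have hflat : ∀ k u, ‖u - xk k‖ ≤ Rk k →
      f u = (yb - yk k) + (τk k - xsk k (u - xk k)) • wk k := by
    intro k u hu
    rw [hfloc k u (lt_of_le_of_lt hu (hRδ k)), hhl]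
    rw [hbk_one k u (le_trans hu (hRσ k)), hβk_one k u hu]
    have hT : Tk k (xsk k (u - xk k)) = xsk k (u - xk k) := by
      rw [hTk]
      have h2 : |xsk k (u - xk k)| ≤ μ^2 * ‖xk k - xb‖ := by
        have h3 : |xsk k (u - xk k)| ≤ ‖xsk k‖ * ‖u - xk k‖ := by
          rw [← Real.norm_eq_abs]; exact (xsk k).le_opNorm _
        have h4 : ‖xsk k‖ * ‖u - xk k‖ ≤ c * Rk k :=
          mul_le_mul (hck k).le hu (norm_nonneg _) hc.le
        exact le_trans h3 (le_trans h4 (hcR k))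
      rw [abs_le] at h2
      exact clampS_eq h2.1 h2.2
    rw [hT, one_smul, one_mul, mul_one, smul_neg, sub_smul]
    abel
  have hopn : ∀ k (z : Y), |ysk k z| ≤ ‖z‖ := by
    intro k z
    have h1 := (ysk k).le_opNorm z
    rw [hysk k, one_mul, Real.norm_eq_abs] at h1
    exact h1
  have hqle : ∀ k, ysk k (wk k) ≤ 1 :=
    fun k => le_trans (le_abs_self _) (le_trans (hopn k _) (hwk k))
  -- the perturbed graph points
  have hmemH : ∀ k, (yb + τk k • wk k) ∈ addFun F f (xk k) := by
    intro k
    have h0 : ‖xk k - xk k‖ ≤ Rk k := by rw [sub_self, norm_zero]; exact (hRpos k).le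
    show (yb + τk k • wk k) - f (xk k) ∈ F (xk k)
    rw [hflat k (xk k) h0, sub_self, map_zero, sub_zero]
    have heq : (yb + τk k • wk k) - ((yb - yk k) + τk k • wk k) = yk k := by abel
    rw [heq]
    exact hmemk k
  -- the coderivative of the perturbed map at the new graph points
  have hcodH : ∀ k (ε : ℝ), εk k * (1+2*c) ≤ ε →
      (0 : X →L[ℝ] ℝ) ∈ epsCoderiv ε (addFun F f) (xk k) (yb + τk k • wk k) (ysk k) := by
    intro k ε hεε
    simp only [epsCoderiv, Set.mem_setOf_eq]
    intro η hη
    have hc1 : (0:ℝ) < 1 + c := by linarith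
    have hηF : 0 < η/(1+c) := by positivity
    obtain ⟨δF, hδFpos, hδF⟩ := hcodk k (η/(1+c)) hηF
    refine ⟨min (Rk k) (δF/(1+c)), lt_min (hRpos k) (div_pos hδFpos hc1), ?_⟩
    intro u z hz hnear
    have hv : z - f u ∈ F u := hz
    have hA0 : (0:ℝ) ≤ ‖u - xk k‖ := norm_nonneg _
    have hB0 : (0:ℝ) ≤ ‖z - (yb + τk k • wk k)‖ := norm_nonneg _
    have hAR : ‖u - xk k‖ ≤ Rk k := by
      have h1 := lt_of_lt_of_le hnear (min_le_left _ _)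
      linarith
    have hfu := hflat k u hAR
    have hveq : z - f u - yk k = (z - (yb + τk k • wk k)) + xsk k (u - xk k) • wk k := by
      rw [hfu, sub_smul]; abel
    have ht : |xsk k (u - xk k)| ≤ c * ‖u - xk k‖ := by
      have h3 : |xsk k (u - xk k)| ≤ ‖xsk k‖ * ‖u - xk k‖ := by
        rw [← Real.norm_eq_abs]; exact (xsk k).le_opNorm _
      exact le_trans h3 (mul_le_mul_of_nonneg_right (hck k).le hA0)
    have hvn : ‖z - f u - yk k‖ ≤ ‖z - (yb + τk k • wk k)‖ + c * ‖u - xk k‖ := by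
      rw [hveq]
      refine le_trans (norm_add_le _ _) ?_
      have h4 : ‖xsk k (u - xk k) • wk k‖ ≤ |xsk k (u - xk k)| := by
        rw [norm_smul, Real.norm_eq_abs]
        nlinarith [hwk k, abs_nonneg (xsk k (u - xk k)), norm_nonneg (wk k)]
      linarith [ht]
    have hδap : ‖u - xk k‖ + ‖z - f u - yk k‖ < δF := by
      have h5 : ‖u - xk k‖ + ‖z - (yb + τk k • wk k)‖ < δF/(1+c) :=
        lt_of_lt_of_le hnear (min_le_right _ _)
      rw [lt_div_iff₀ hc1] at h5
      nlinarith [hvn]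
    have hkey := hδF u (z - f u) hv hδap
    rw [hveq, map_add, map_smul, smul_eq_mul, ← hveq] at hkey
    simp only [ContinuousLinearMap.zero_apply, zero_sub]
    have hq1 := hqle k
    have hq2 := hwk2 k
    have hVsub := hvn
    set t := xsk k (u - xk k) with htdef
    set P := ysk k (z - (yb + τk k • wk k)) with hPdef
    set q := ysk k (wk k) with hqdef
    set A := ‖u - xk k‖
    set B := ‖z - (yb + τk k • wk k)‖
    set V := ‖z - f u - yk k‖
    -- hkey : t - (P + t * q) ≤ (εk k + η/(1+c)) * (A + V)
    have f1 : t*(q-1) ≤ c*A*εk k := by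
      have g1 : |t| * (1 - q) ≤ (c*A) * εk k :=
        mul_le_mul ht (by linarith) (by linarith) (mul_nonneg hc.le hA0)
      have g2 : (-t) * (1 - q) ≤ |t| * (1 - q) :=
        mul_le_mul_of_nonneg_right (neg_le_abs t) (by linarith)
      nlinarith [g1, g2]
    have f2 : (εk k + η/(1+c)) * (A + V) ≤ (εk k + η/(1+c)) * ((1+c)*(A+B)) := by
      apply mul_le_mul_of_nonneg_left _ (add_pos (hε0 k) hηF).le
      nlinarith [hVsub, hA0]
    have f3 : (εk k + η/(1+c)) * ((1+c)*(A+B)) = (εk k * (1+c) + η) * (A+B) := by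
      field_simp
    have f4 : (εk k * (1+2*c) + η) * (A+B) ≤ (ε + η)*(A+B) :=
      mul_le_mul_of_nonneg_right (by linarith [hεε]) (add_nonneg hA0 hB0)
    have f5 : (0:ℝ) ≤ c * εk k * B := mul_nonneg (mul_nonneg hc.le (hε0 k).le) hB0
    nlinarith [hkey, f1, f2, f4, f3.le, f3.ge, f5]
  -- srg1plus of the perturbed map vanishes
  have hsrg0 : srg1plus (addFun F f) xb yb = 0 := by
    refine le_antisymm ?_ zero_le
    unfold srg1plus
    refine iSup_le fun ε => iSup_le fun hε => ?_
    refine ENNReal.le_of_forall_pos_le_add fun ν hν _ => ?_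
    rw [zero_add]
    have hν' : (0:ℝ) < (ν:ℝ) := hν
    have hc2 : (0:ℝ) < 1+2*c := by linarith
    obtain ⟨k, hk⟩ := hεto0 (min (ε/(1+2*c)) ((ν:ℝ)^2/(1+2*c)))
      (lt_min (div_pos hε hc2) (div_pos (pow_pos hν' 2) hc2))
    have hk1 : εk k * (1+2*c) ≤ ε := by
      have h1 : εk k < ε/(1+2*c) := lt_of_lt_of_le hk (min_le_left _ _)
      rw [lt_div_iff₀ hc2] at h1
      linarith
    have hk2 : Real.sqrt (εk k * (1+2*c)) < (ν:ℝ) := by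
      have h1 : εk k < (ν:ℝ)^2/(1+2*c) := lt_of_lt_of_le hk (min_le_right _ _)
      rw [lt_div_iff₀ hc2] at h1
      rw [Real.sqrt_lt' hν']
      linarith
    have hρε2 : ‖xk k - xb‖ < ε := by
      have h2 : εk k ≤ ε := by nlinarith [hε0 k, hk1, hc]
      exact lt_of_lt_of_le (hρε k) h2
    refine le_trans (sInf_le (show _ ∈ {r : ℝ≥0∞ | ∃ (x : X) (y : Y)
      (xs : X →L[ℝ] ℝ) (ys : Y →L[ℝ] ℝ), y ∈ addFun F f x ∧ ‖ys‖ = 1 ∧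
      xs ∈ epsCoderiv ε (addFun F f) x y ys ∧ 0 < ‖x - xb‖ ∧ ‖x - xb‖ < ε ∧
      r = ENNReal.ofReal (‖y - yb‖ / ‖x - xb‖) + ENNReal.ofReal ‖xs‖} from
      ⟨xk k, yb + τk k • wk k, 0, ysk k, hmemH k, hysk k, hcodH k ε hk1,
        hρ0 k, hρε2, rfl⟩)) ?_
    rw [norm_zero, ENNReal.ofReal_zero, add_zero]
    have hval : ‖(yb + τk k • wk k) - yb‖ / ‖xk k - xb‖ ≤ (ν:ℝ) := by
      rw [show (yb + τk k • wk k) - yb = τk k • wk k by abel, norm_smul, Real.norm_eq_abs,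
        abs_of_pos (hτpos k), div_le_iff₀ (hρ0 k)]
      have h7 : τk k * ‖wk k‖ ≤ τk k := by
        nlinarith [hwk k, hτpos k, norm_nonneg (wk k)]
      have h8 : τk k ≤ Real.sqrt (εk k*(1+2*c)) * ‖xk k - xb‖ := by
        rw [hτk]
        exact mul_le_mul_of_nonneg_left (hRρ1 k) (Real.sqrt_nonneg _)
      nlinarith [hk2, hρ0 k, Real.sqrt_nonneg (εk k*(1+2*c))]
    calc ENNReal.ofReal (‖(yb + τk k • wk k) - yb‖ / ‖xk k - xb‖)
        ≤ ENNReal.ofReal ((ν:ℝ)) := ENNReal.ofReal_le_ofReal hval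
    _ = (ν : ℝ≥0∞) := ENNReal.ofReal_coe_nnreal
  -- no point near xk k is mapped to yb
  have hnotin : ∀ k u, ‖u - xk k‖ < Rk k → yb ∉ addFun F f u := by
    intro k u hu hmem2
    have hv : yb - f u ∈ F u := hmem2
    have hfu := hflat k u hu.le
    have hA0 : (0:ℝ) ≤ ‖u - xk k‖ := norm_nonneg _
    have ht : |xsk k (u - xk k)| ≤ c * Rk k := by
      have h3 : |xsk k (u - xk k)| ≤ ‖xsk k‖ * ‖u - xk k‖ := by
        rw [← Real.norm_eq_abs]; exact (xsk k).le_opNorm _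
      refine le_trans h3 ?_
      exact mul_le_mul (hck k).le hu.le hA0 hc.le
    have hveq : yb - f u - yk k = (xsk k (u - xk k) - τk k) • wk k := by
      rw [hfu, sub_smul, sub_smul]; abel
    have hvb : ‖yb - f u - yk k‖ ≤ c * Rk k + τk k := by
      rw [hveq, norm_smul, Real.norm_eq_abs]
      have h5 : |xsk k (u - xk k) - τk k| ≤ c * Rk k + τk k := by
        have := abs_sub (xsk k (u - xk k)) (τk k)
        rw [abs_of_pos (hτpos k)] at this
        linarith [ht]
      nlinarith [hwk k, abs_nonneg (xsk k (u - xk k) - τk k), hRpos k, hτpos k, hc]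
    have hδap : ‖u - xk k‖ + ‖yb - f u - yk k‖ < δF2 k := by
      have h8 := hRδF k
      rw [le_div_iff₀ (by linarith : (0:ℝ) < 3+c)] at h8
      nlinarith [hRpos k, hvb, hu, hτR k]
    have hkey := hδF2 k u (yb - f u) hv hδap
    rw [hveq, map_smul, smul_eq_mul, ← hveq] at hkey
    have hq1 := hqle k
    have hq2 := hwk2 k
    set t := xsk k (u - xk k) with htdef
    set q := ysk k (wk k) with hqdef
    -- hkey : t - (t - τk k) * q ≤ (εk k + εk k) * (‖u - xk k‖ + ‖yb - f u - yk k‖)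
    have hAV : ‖u - xk k‖ + ‖yb - f u - yk k‖ ≤ (2+c) * Rk k := by
      nlinarith [hu.le, hvb, hτR k]
    have hstep : τk k ≤ 2 * εk k * (4+3*c) * Rk k := by
      have l1 : -(c * Rk k * εk k) ≤ t*(1 - q) := by
        have g1 : |t| * (1 - q) ≤ (c * Rk k) * εk k :=
          mul_le_mul ht (by linarith) (by linarith) (mul_nonneg hc.le (hRpos k).le)
        have g2 : (-t) * (1 - q) ≤ |t| * (1 - q) :=
          mul_le_mul_of_nonneg_right (neg_le_abs t) (by linarith)
        nlinarith [g1, g2]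
      have l2 : τk k * (1 - εk k) ≤ τk k * q :=
        mul_le_mul_of_nonneg_left (by linarith) (hτpos k).le
      have l3 : (εk k + εk k) * (‖u - xk k‖ + ‖yb - f u - yk k‖)
          ≤ 2 * εk k * ((2+c) * Rk k) := by
        nlinarith [hε0 k, hAV]
      have l4 : τk k * εk k ≤ τk k * (1/2) :=
        mul_le_mul_of_nonneg_left (hεhalf k) (hτpos k).le
      nlinarith [hkey, l1, l2, l3, l4, hτpos k]
    have h9 : Real.sqrt (εk k * (1+2*c)) ≤ 2 * εk k * (4+3*c) := by
      rw [hτk] at hstep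
      exact le_of_mul_le_mul_right (by linarith [hstep]) (hRpos k)
    have hsq : εk k * (1+2*c) ≤ (2 * εk k * (4+3*c))^2 := by
      calc εk k * (1+2*c) = Real.sqrt (εk k * (1+2*c))^2 :=
            (Real.sq_sqrt (mul_nonneg (hε0 k).le (by linarith))).symm
      _ ≤ (2 * εk k * (4+3*c))^2 := by
            nlinarith [Real.sqrt_nonneg (εk k * (1+2*c)), h9]
    have h10 := hεcap k
    rw [le_div_iff₀ (mul_pos (by norm_num) (pow_pos (by linarith : (0:ℝ) < 4+3*c) 2) :
      (0:ℝ) < 8*(4+3*c)^2)] at h10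
    have h11 := hε0 k
    have h12 : εk k * (εk k * (8*(4+3*c)^2)) ≤ εk k * (1+2*c) :=
      mul_le_mul_of_nonneg_left h10 h11.le
    nlinarith [hsq, h12, mul_pos h11 (show (0:ℝ) < 1+2*c by linarith)]
  -- the perturbed map is not subregular
  have hnsub : ¬ Subregular (addFun F f) xb yb := by
    rintro ⟨α, hα, δ, hδpos, hsub⟩
    have hα' : (0:ℝ) < (α:ℝ) := hα
    have hc2 : (0:ℝ) < 1+2*c := by linarith
    obtain ⟨k, hk⟩ := hεto0 (min δ ((α:ℝ)^2/(1+2*c)))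
      (lt_min hδpos (div_pos (pow_pos hα' 2) hc2))
    have hkδ : ‖xk k - xb‖ < δ :=
      lt_trans (hρε k) (lt_of_lt_of_le hk (min_le_left _ _))
    have hkα : Real.sqrt (εk k * (1+2*c)) < (α:ℝ) := by
      have h1 : εk k < (α:ℝ)^2/(1+2*c) := lt_of_lt_of_le hk (min_le_right _ _)
      rw [lt_div_iff₀ hc2] at h1
      rw [Real.sqrt_lt' hα']
      linarith
    have h2 : infEdist yb (addFun F f (xk k)) ≤ ENNReal.ofReal (τk k) := by
      refine le_trans (infEdist_le_edist_of_mem (hmemH k)) ?_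
      rw [edist_dist, dist_eq_norm]
      apply ENNReal.ofReal_le_ofReal
      rw [show yb - (yb + τk k • wk k) = -(τk k • wk k) by abel, norm_neg, norm_smul,
        Real.norm_eq_abs, abs_of_pos (hτpos k)]
      nlinarith [hwk k, hτpos k, norm_nonneg (wk k)]
    have h3 : ENNReal.ofReal (Rk k) ≤ infEdist (xk k) (svInv (addFun F f) yb) := by
      rw [show infEdist (xk k) (svInv (addFun F f) yb) = infEDist (xk k) (svInv (addFun F f) yb) from rfl, le_infEDist]
      intro p hp
      have hp2 : yb ∈ addFun F f p := hp
      have h4 : Rk k ≤ ‖p - xk k‖ := by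
        by_contra h5
        push_neg at h5
        exact hnotin k p h5 hp2
      rw [edist_dist, dist_eq_norm]
      exact ENNReal.ofReal_le_ofReal (by rw [norm_sub_rev]; exact h4)
    have h5 := hsub (xk k) hkδ
    have h6 : (α : ℝ≥0∞) * ENNReal.ofReal (Rk k) ≤ ENNReal.ofReal (τk k) :=
      le_trans (mul_le_mul_right h3 _) (le_trans h5 h2)
    rw [← ENNReal.ofReal_coe_nnreal, ← ENNReal.ofReal_mul (by positivity)] at h6
    rw [ENNReal.ofReal_le_ofReal_iff (hτpos k).le] at h6
    rw [hτk] at h6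
    nlinarith [hkα, hRpos k, h6]
  exact ⟨f, hfxb, ⟨_, hlipf, hKlt⟩, hlm, hsrg0, hnsub⟩




lemma main_construction (F : X → Set Y) (xb : X) (yb : Y) (c γ : ℝ)
    (hc : 0 < c) (hcγ : c < γ) (hsrg : srg1plus F xb yb < ENNReal.ofReal c) :
    ∃ f : X → Y, f xb = 0 ∧
      (∃ K : ℝ≥0, LipschitzWith K f ∧ (K : ℝ≥0∞) < ENNReal.ofReal γ) ∧
      lipMod f xb < ENNReal.ofReal γ ∧ srg1plus (addFun F f) xb yb = 0 ∧
      ¬ Subregular (addFun F f) xb yb := by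
  classical
  -- the parameter μ
  set μ : ℝ := min (1/4) ((γ - c)/(2*(1+2*γ))) with hμdef
  have hγ0 : 0 < γ := lt_trans hc hcγ
  have hμ0 : 0 < μ := lt_min (by norm_num) (div_pos (by linarith) (by positivity))
  have hμ4 : μ ≤ 1/4 := min_le_left _ _
  have hμle : μ ≤ (γ - c)/(2*(1+2*γ)) := min_le_right _ _
  have h2μ : (0:ℝ) < 1 - 2*μ := by nlinarith
  have hΛγ : (c + μ)/(1 - 2*μ) < γ := by
    rw [div_lt_iff₀ h2μ]
    have : μ * (2*(1+2*γ)) ≤ γ - c := (le_div_iff₀ (by positivity)).mp hμle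
    nlinarith
  -- the cap E
  set E : ℝ := min (1/2) (min (μ^2/(1+2*c)) ((1+2*c)/(8*(4+3*c)^2))) with hEdef
  have hE0 : 0 < E := lt_min (by norm_num) (lt_min (by positivity) (by positivity))
  -- witnesses at every scale
  have key : ∀ ε : ℝ, 0 < ε → ∃ x : X, ∃ y : Y, ∃ xs : X →L[ℝ] ℝ, ∃ ys : Y →L[ℝ] ℝ,
      y ∈ F x ∧ ‖ys‖ = 1 ∧ xs ∈ epsCoderiv ε F x y ys ∧ 0 < ‖x - xb‖ ∧ ‖x - xb‖ < ε ∧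
      ‖y - yb‖ / ‖x - xb‖ + ‖xs‖ < c := by
    intro ε hε
    have h1 : sInf {r : ℝ≥0∞ | ∃ (x : X) (y : Y)
        (xs : X →L[ℝ] ℝ) (ys : Y →L[ℝ] ℝ), y ∈ F x ∧ ‖ys‖ = 1 ∧
        xs ∈ epsCoderiv ε F x y ys ∧ 0 < ‖x - xb‖ ∧ ‖x - xb‖ < ε ∧
        r = ENNReal.ofReal (‖y - yb‖ / ‖x - xb‖) + ENNReal.ofReal ‖xs‖}
        ≤ srg1plus F xb yb := by
      show _ ≤ ⨆ (ε : ℝ) (_ : 0 < ε), _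
      exact le_iSup₂_of_le ε hε le_rfl
    obtain ⟨r, hrmem, hrlt⟩ := sInf_lt_iff.mp (lt_of_le_of_lt h1 hsrg)
    obtain ⟨x, y, xs, ys, hm, hy, hcd, hp, hl, hreq⟩ := hrmem
    refine ⟨x, y, xs, ys, hm, hy, hcd, hp, hl, ?_⟩
    rw [hreq, ← ENNReal.ofReal_add (by positivity) (norm_nonneg _)] at hrlt
    exact (ENNReal.ofReal_lt_ofReal_iff hc).mp hrlt
  choose xw yw xsw ysw hmem hys hcod hr0 hrε hsumw using key
  -- the dual-norming vectors
  have keyw : ∀ ε (hε : 0 < ε), ∃ w : Y, ‖w‖ ≤ 1 ∧ 1 - ε < ysw ε hε w := by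
    intro ε hε
    have h1 : 1 - ε < ‖ysw ε hε‖ := by rw [hys]; linarith
    obtain ⟨y0, hy0, hval⟩ := (ysw ε hε).exists_lt_apply_of_lt_opNorm h1
    rw [Real.norm_eq_abs] at hval
    rcases le_or_gt 0 (ysw ε hε y0) with hsgn | hsgn
    · exact ⟨y0, hy0.le, by rwa [abs_of_nonneg hsgn] at hval⟩
    · refine ⟨-y0, by simpa using hy0.le, ?_⟩
      rw [map_neg]; rwa [abs_of_neg hsgn] at hval
  choose ww hw1 hw2 using keyw
  -- the δ's for η := ε
  have keyδ : ∀ ε (hε : 0 < ε), ∃ δ, 0 < δ ∧ ∀ u v, v ∈ F u →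
      ‖u - xw ε hε‖ + ‖v - yw ε hε‖ < δ →
      xsw ε hε (u - xw ε hε) - ysw ε hε (v - yw ε hε) ≤ (ε + ε) * (‖u - xw ε hε‖ + ‖v - yw ε hε‖) := by
    intro ε hε
    obtain ⟨δ, hδ0, hδ⟩ := hcod ε hε ε hε
    exact ⟨δ, hδ0, hδ⟩
  choose δFw hδF0 hδFw using keyδ
  -- the recursive scale sequence
  obtain ⟨es, hes0, hessucc⟩ : ∃ es : ℕ → {e : ℝ // 0 < e}, (es 0).1 = E ∧
      ∀ k, (es (k+1)).1 = min ((es k).1/2) (μ/4 * ‖xw (es k).1 (es k).2 - xb‖) := by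
    refine ⟨fun n => Nat.rec ⟨E, hE0⟩ (fun _ p =>
      ⟨min (p.1/2) (μ/4 * ‖xw p.1 p.2 - xb‖),
        lt_min (half_pos p.2) (mul_pos (by positivity) (hr0 p.1 p.2))⟩) n, rfl, fun k => rfl⟩
  have hεE : ∀ k, (es k).1 ≤ E / 2^k := by
    intro k; induction k with
    | zero => simp [hes0]
    | succ n ih =>
      rw [hessucc]
      refine le_trans (min_le_left _ _) ?_
      rw [pow_succ, ← div_div]
      linarith [ih]
  have hεto0 : ∀ a : ℝ, 0 < a → ∃ k, (es k).1 < a := by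
    intro a ha
    obtain ⟨n, hn⟩ := pow_unbounded_of_one_lt (R := ℝ) (E/a) one_lt_two
    refine ⟨n, lt_of_le_of_lt (hεE n) ?_⟩
    rw [div_lt_iff₀ (by positivity)]
    rw [div_lt_iff₀ ha] at hn
    nlinarith [hn]
  exact srg_construction F xb yb c γ μ hc hμ0 hμ4 hΛγ
    (fun k => (es k).1) (fun k => xw (es k).1 (es k).2) (fun k => yw (es k).1 (es k).2)
    (fun k => xsw (es k).1 (es k).2) (fun k => ysw (es k).1 (es k).2)
    (fun k => ww (es k).1 (es k).2) (fun k => δFw (es k).1 (es k).2)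
    (fun k => (es k).2)
    (fun k => le_trans (hεE k) (div_le_self hE0.le (one_le_pow₀ (by norm_num : (1:ℝ) ≤ 2))))
    hεto0
    (fun k => hmem _ _) (fun k => hr0 _ _) (fun k => hrε _ _) (fun k => hsumw _ _)
    (fun k => hys _ _) (fun k => hw1 _ _) (fun k => hw2 _ _)
    (fun k => hδF0 _ _) (fun k => hδFw _ _) (fun k => hcod _ _)
    (fun k => by
      have h1 : ‖xw (es (k+1)).1 (es (k+1)).2 - xb‖ < (es (k+1)).1 := hrε _ _
      have h2 : (es (k+1)).1 ≤ μ/4 * ‖xw (es k).1 (es k).2 - xb‖ := by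
        rw [hessucc]; exact min_le_right _ _
      exact le_trans h1.le h2)

/-- Lemma 5.5(i) and the estimate rad[SR]_lip ≤ srg₁⁺ (Theorem 5.4, (5.11)). -/
theorem radSRlip_le_srg1plus [CompleteSpace X] [CompleteSpace Y]
    (F : X → Set Y) (xb : X) (yb : Y) (h : yb ∈ F xb) (γ : ℝ) (hγ : 0 < γ) :
    (srg1plus F xb yb < ENNReal.ofReal γ →
      ∃ f : X → Y, f xb = 0 ∧
        (∃ (K : ℝ≥0) (δ : ℝ), 0 < δ ∧ LipschitzOnWith K f (ball xb δ)) ∧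
        lipMod f xb < ENNReal.ofReal γ ∧ srg1plus (addFun F f) xb yb = 0) ∧
    radSRlip F xb yb ≤ srg1plus F xb yb := by
  constructor
  · intro hsrg
    have hne : srg1plus F xb yb ≠ ⊤ := ne_top_of_lt hsrg
    set s := (srg1plus F xb yb).toReal with hs
    have hs0 : 0 ≤ s := ENNReal.toReal_nonneg
    have hsγ : s < γ := by
      have := ENNReal.toReal_lt_toReal hne (by simp : ENNReal.ofReal γ ≠ ⊤) |>.mpr
      · rw [ENNReal.toReal_ofReal hγ.le] at this
        exact this hsrg
    set c := (s + γ)/2 with hcdef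
    have hc : 0 < c := by positivity
    have hcγ : c < γ := by rw [hcdef]; linarith
    have hsrg' : srg1plus F xb yb < ENNReal.ofReal c := by
      rw [← ENNReal.ofReal_toReal hne, ← hs]
      exact (ENNReal.ofReal_lt_ofReal_iff hc).mpr (by rw [hcdef]; linarith)
    obtain ⟨f, hf0, ⟨K, hK, hKγ⟩, hlm, hsrg0, _⟩ := main_construction F xb yb c γ hc hcγ hsrg'
    exact ⟨f, hf0, ⟨K, 1, one_pos, hK.lipschitzOnWith⟩, hlm, hsrg0⟩
  · refine ENNReal.le_of_forall_pos_le_add fun ε hε hlt => ?_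
    have hne : srg1plus F xb yb ≠ ⊤ := hlt.ne
    set s := (srg1plus F xb yb).toReal with hs
    have hs0 : 0 ≤ s := ENNReal.toReal_nonneg
    have hε0 : (0:ℝ) < ε := hε
    set c := s + ε/2 with hcdef
    set γ' := s + (ε:ℝ) with hγdef
    have hc : 0 < c := by positivity
    have hcγ : c < γ' := by rw [hcdef, hγdef]; linarith
    have hsrg' : srg1plus F xb yb < ENNReal.ofReal c := by
      rw [← ENNReal.ofReal_toReal hne, ← hs]
      exact (ENNReal.ofReal_lt_ofReal_iff hc).mpr (by rw [hcdef]; linarith)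
    obtain ⟨f, hf0, ⟨K, hK, hKγ⟩, hlm, _, hnsub⟩ := main_construction F xb yb c γ' hc hcγ hsrg'
    have hmem : lipMod f xb ∈ {r : ℝ≥0∞ | ∃ f : X → Y, f xb = 0 ∧
        (∃ (K : ℝ≥0) (δ : ℝ), 0 < δ ∧ LipschitzOnWith K f (ball xb δ)) ∧
        ¬ Subregular (addFun F f) xb yb ∧ r = lipMod f xb} :=
      ⟨f, hf0, ⟨K, 1, one_pos, hK.lipschitzOnWith⟩, hnsub, rfl⟩
    refine le_trans (sInf_le hmem) ?_
    refine le_trans hlm.le ?_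
    rw [hγdef, ENNReal.ofReal_add hs0 (by positivity), hs,
      ENNReal.ofReal_toReal hne, ENNReal.ofReal_coe_nnreal]
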